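/- Let κ₁, κ₂ ∈ ℂ and consider Θ₃(z) = z⁶ − 15κ₁z³ + 45κ₂z − 45κ₁². For z₀ ∈ ℂ \ {0}, the point z₀ is a multiple root of Θ₃ (i.e. Θ₃(z₀) = 0 and Θ₃′(z₀) = 0) if and only if κ₁ = z₀³/3 and κ₂ = z₀⁵/5. -/

import Mathlib

open Complex

lemma theta3_deriv (κ₁ κ₂ : ℂ) (z₀ : ℂ) :
    deriv (fun z : ℂ => z ^ 6 - 15 * κ₁ * z ^ 3 + 45 * κ₂ * z - 45 * κ₁ ^ 2) z₀ =
      6 * z₀ ^ 5 - 45 * κ₁ * z₀ ^ 2 + 45 * κ₂ := by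
  have h : HasDerivAt (fun z : ℂ => z ^ 6 - 15 * κ₁ * z ^ 3 + 45 * κ₂ * z - 45 * κ₁ ^ 2)
      (6 * z₀ ^ 5 - 45 * κ₁ * z₀ ^ 2 + 45 * κ₂) z₀ := by
    have := (((hasDerivAt_pow 6 z₀).sub
      (((hasDerivAt_pow 3 z₀).const_mul (15 * κ₁)))).add
      ((hasDerivAt_id z₀).const_mul (45 * κ₂))).sub_const (45 * κ₁ ^ 2)
    exact this.congr_deriv (by push_cast; ring)
  exact h.deriv

/-- **Multiple roots of the Adler–Moser polynomial
`Θ₃(z) = z⁶ − 15κ₁z³ + 45κ₂z − 45κ₁²`.**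
For `z₀ ≠ 0`, `z₀` is a multiple root of `Θ₃` (i.e. `Θ₃(z₀) = 0` and `Θ₃′(z₀) = 0`)
iff `κ₁ = z₀³/3` and `κ₂ = z₀⁵/5`. -/
theorem theta3_multiple_root_iff (κ₁ κ₂ : ℂ) (z₀ : ℂ) (hz₀ : z₀ ≠ 0) :
    ((fun z : ℂ => z ^ 6 - 15 * κ₁ * z ^ 3 + 45 * κ₂ * z - 45 * κ₁ ^ 2) z₀ = 0 ∧
      deriv (fun z : ℂ => z ^ 6 - 15 * κ₁ * z ^ 3 + 45 * κ₂ * z - 45 * κ₁ ^ 2) z₀ = 0) ↔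
    (κ₁ = z₀ ^ 3 / 3 ∧ κ₂ = z₀ ^ 5 / 5) := by
  rw [theta3_deriv]
  simp only
  constructor
  · rintro ⟨h1, h2⟩
    have hsq : (z₀ ^ 3 - 3 * κ₁) ^ 2 = 0 := by
      have hz : z₀ * (6 * z₀ ^ 5 - 45 * κ₁ * z₀ ^ 2 + 45 * κ₂) = 0 := by rw [h2]; ring
      linear_combination (-(1:ℂ)/5) * h1 + (1/5) * hz
    have hk1 : κ₁ = z₀ ^ 3 / 3 := by
      have := pow_eq_zero_iff (n := 2) (by norm_num) |>.mp hsq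
      linear_combination (-(1:ℂ)/3) * this
    refine ⟨hk1, ?_⟩
    subst hk1
    have hk2 : (45:ℂ) * κ₂ = 9 * z₀ ^ 5 := by linear_combination h2
    linear_combination (1/45 : ℂ) * hk2
  · rintro ⟨h1, h2⟩
    subst h1 h2
    constructor <;> ring
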